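/- Let n ≥ 2 and let (a_1, ..., a_n) be a smooth sequence of relatively prime positive integers, and let S = ⟨a_1, ..., a_n⟩. Then the Frobenius number of S satisfies F(S) = Σ_{i=2}^n c_i a_i − Σ_{i=1}^n a_i, where c_i = gcd(a_1,...,a_{i−1}) / gcd(a_1,...,a_i). -/

import Mathlib

open Polynomial
open scoped Classical

/-- A numerical semigroup: a subset of `ℕ` containing `0`, closed under addition,
with finite complement in `ℕ`. -/
structure NumericalSemigroup where
  carrier : Set ℕ
  zero_mem : 0 ∈ carrier
  add_mem : ∀ ⦃a b : ℕ⦄, a ∈ carrier → b ∈ carrier → a + b ∈ carrier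
  finite_compl : Set.Finite carrierᶜ

namespace NumericalSemigroup

/-- The Hilbert series `H_S(x) = Σ_{s ∈ S} x^s`. -/
noncomputable def H (S : NumericalSemigroup) : PowerSeries ℤ :=
  PowerSeries.mk fun n => if n ∈ S.carrier then 1 else 0

/-- The Hilbert series evaluated at `x^w`: `H_S(x^w) = Σ_{s ∈ S} x^{w·s}`. -/
noncomputable def Hexp (S : NumericalSemigroup) (w : ℕ) : PowerSeries ℤ :=
  PowerSeries.mk fun n => if ∃ s ∈ S.carrier, n = w * s then 1 else 0

/-- The semigroup polynomial `P_S(x) = (1-x)·H_S(x) = 1 + (x-1)·Σ_{s ∉ S} x^s`. -/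
noncomputable def P (S : NumericalSemigroup) : Polynomial ℤ :=
  1 + (X - 1) * ∑ s ∈ S.finite_compl.toFinset, X ^ s

/-- The Frobenius number: the largest integer not in `S` (equal to `-1` when `S = ℕ`). -/
noncomputable def Frob (S : NumericalSemigroup) : ℤ :=
  (insert (-1 : ℤ) (S.finite_compl.toFinset.image fun n : ℕ => (n : ℤ))).max'
    (Finset.insert_nonempty _ _)

/-- The genus: the number of gaps of `S`. -/
noncomputable def genus (S : NumericalSemigroup) : ℕ := S.finite_compl.toFinset.card

/-- `S` viewed as a set of integers. -/
def intSet (S : NumericalSemigroup) : Set ℤ := (fun n : ℕ => (n : ℤ)) '' S.carrier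

/-- `S` is cyclotomic if every complex root of `P_S` lies in the closed unit disc. -/
def IsCyclotomicNS (S : NumericalSemigroup) : Prop :=
  ∀ z : ℂ, Polynomial.aeval z S.P = 0 → ‖z‖ ≤ 1

/-- `S` is symmetric if for every integer `z`, `z ∈ S ↔ F(S) - z ∉ S`. -/
def IsSymmetric (S : NumericalSemigroup) : Prop :=
  ∀ z : ℤ, z ∈ S.intSet ↔ S.Frob - z ∉ S.intSet

/-- The Apéry set of `S` with respect to `m`: elements `s ∈ S` with `s - m ∉ S`
(in particular all `s ∈ S` with `s < m`). -/
def Ap (S : NumericalSemigroup) (m : ℕ) : Set ℕ :=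
  {s ∈ S.carrier | ∀ t ∈ S.carrier, t + m ≠ s}

end NumericalSemigroup

/-- `d_k = gcd(a_1, …, a_k)`. -/
def dseq (a : ℕ → ℕ) (k : ℕ) : ℕ := (Finset.Icc 1 k).gcd a

/-- `c_k = d_{k-1} / d_k`. -/
def cseq (a : ℕ → ℕ) (k : ℕ) : ℕ := dseq a (k - 1) / dseq a k

/-- The numerical semigroup (as a set) generated by `a_1, …, a_k`. -/
def gen (a : ℕ → ℕ) (k : ℕ) : Set ℕ := ↑(AddSubmonoid.closure (a '' Set.Icc 1 k))

/-- The sequence `(a_1, …, a_n)` is smooth if `c_k·a_k ∈ ⟨a_1, …, a_{k-1}⟩` for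
every `k = 2, …, n`. -/
def SmoothSeq (a : ℕ → ℕ) (n : ℕ) : Prop :=
  ∀ k, 2 ≤ k → k ≤ n → cseq a k * a k ∈ gen a (k - 1)

section FrobeniusAux

lemma mem_gen_iff (a : ℕ → ℕ) (k m : ℕ) :
    m ∈ gen a k ↔ ∃ f : ℕ → ℕ, m = ∑ i ∈ Finset.Icc 1 k, f i * a i := by
  constructor
  · intro hm
    have hle : AddSubmonoid.closure (a '' Set.Icc 1 k) ≤
        { carrier := {m : ℕ | ∃ f : ℕ → ℕ, m = ∑ i ∈ Finset.Icc 1 k, f i * a i},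
          zero_mem' := ⟨fun _ => 0, by simp⟩,
          add_mem' := by
            rintro x y ⟨f, rfl⟩ ⟨g, rfl⟩
            exact ⟨f + g, by simp [add_mul, Finset.sum_add_distrib]⟩ } := by
      rw [AddSubmonoid.closure_le]
      rintro x ⟨i, hi, rfl⟩
      refine ⟨fun j => if j = i then 1 else 0, ?_⟩
      rw [Set.mem_Icc] at hi
      simp [ite_mul, Finset.sum_ite_eq', Finset.mem_Icc, hi.1, hi.2]
    exact hle hm
  · rintro ⟨f, rfl⟩
    apply AddSubmonoid.sum_mem
    intro i hi
    rw [Finset.mem_Icc] at hi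
    have : a i ∈ AddSubmonoid.closure (a '' Set.Icc 1 k) :=
      AddSubmonoid.subset_closure ⟨i, Set.mem_Icc.2 hi, rfl⟩
    simpa [smul_eq_mul] using AddSubmonoid.nsmul_mem _ this (f i)

lemma gen_succ (a : ℕ → ℕ) (k : ℕ) (hk : 1 ≤ k) (m : ℕ) :
    m ∈ gen a k ↔ ∃ s ∈ gen a (k - 1), ∃ j : ℕ, m = s + j * a k := by
  have hins : Finset.Icc 1 k = insert k (Finset.Icc 1 (k - 1)) := by
    ext x; simp [Finset.mem_Icc]; omega
  constructor
  · rw [mem_gen_iff]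
    rintro ⟨f, rfl⟩
    refine ⟨∑ i ∈ Finset.Icc 1 (k - 1), f i * a i, (mem_gen_iff _ _ _).2 ⟨f, rfl⟩, f k, ?_⟩
    rw [hins, Finset.sum_insert (by simp [Finset.mem_Icc]; omega)]
    ring
  · rintro ⟨s, hs, j, rfl⟩
    rw [mem_gen_iff] at hs ⊢
    obtain ⟨f, rfl⟩ := hs
    refine ⟨fun i => if i = k then j else f i, ?_⟩
    rw [hins, Finset.sum_insert (by simp [Finset.mem_Icc]; omega)]
    simp only [if_pos rfl]
    rw [add_comm]
    congr 1
    apply Finset.sum_congr rfl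
    intro x hx
    rw [Finset.mem_Icc] at hx
    rw [if_neg (by omega)]

lemma gen_scale (a b : ℕ → ℕ) (d k : ℕ) (hab : ∀ i, 1 ≤ i → i ≤ k → a i = d * b i) (m : ℕ) :
    m ∈ gen a k ↔ ∃ x ∈ gen b k, m = d * x := by
  constructor
  · rw [mem_gen_iff]
    rintro ⟨f, rfl⟩
    refine ⟨∑ i ∈ Finset.Icc 1 k, f i * b i, (mem_gen_iff _ _ _).2 ⟨f, rfl⟩, ?_⟩
    rw [Finset.mul_sum]
    apply Finset.sum_congr rfl
    intro i hi
    rw [Finset.mem_Icc] at hi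
    rw [hab i hi.1 hi.2]; ring
  · rintro ⟨x, hx, rfl⟩
    rw [mem_gen_iff] at hx ⊢
    obtain ⟨f, rfl⟩ := hx
    refine ⟨f, ?_⟩
    rw [Finset.mul_sum]
    apply Finset.sum_congr rfl
    intro i hi
    rw [Finset.mem_Icc] at hi
    rw [hab i hi.1 hi.2]; ring

lemma dseq_dvd (a : ℕ → ℕ) {k i : ℕ} (h1 : 1 ≤ i) (h2 : i ≤ k) : dseq a k ∣ a i :=
  Finset.gcd_dvd (Finset.mem_Icc.2 ⟨h1, h2⟩)

lemma dseq_pos (a : ℕ → ℕ) {k : ℕ} (hk : 1 ≤ k) (h1 : 0 < a 1) : 0 < dseq a k := by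
  rcases Nat.eq_zero_or_pos (dseq a k) with h | h
  · have := dseq_dvd a le_rfl hk
    rw [h] at this
    omega
  · exact h

lemma dseq_succ (a : ℕ → ℕ) {k : ℕ} (hk : 1 ≤ k) :
    dseq a k = Nat.gcd (a k) (dseq a (k - 1)) := by
  have hins : Finset.Icc 1 k = insert k (Finset.Icc 1 (k - 1)) := by
    ext x; simp [Finset.mem_Icc]; omega
  rw [dseq, hins, Finset.gcd_insert]
  rfl

lemma dseq_scale (a b : ℕ → ℕ) (d k : ℕ) (hab : ∀ i, 1 ≤ i → i ≤ k → a i = d * b i) :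
    dseq a k = d * dseq b k := by
  have : dseq a k = (Finset.Icc 1 k).gcd (fun i => d * b i) := by
    apply Finset.gcd_congr rfl
    intro i hi
    rw [Finset.mem_Icc] at hi
    exact hab i hi.1 hi.2
  rw [this, Finset.gcd_mul_left]
  simp [dseq]

/-- Frobenius data for a set of naturals: `F ≥ -1`, everything above `F` is in the
set, and `F` itself (when it is a natural number) is not. -/
def FrobData (G : Set ℕ) (F : ℤ) : Prop :=
  -1 ≤ F ∧ (∀ m : ℕ, F < (m : ℤ) → m ∈ G) ∧ ∀ m : ℕ, (m : ℤ) = F → m ∉ G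

lemma nsmul_mem_closed {M : Set ℕ} (h0 : 0 ∈ M)
    (hadd : ∀ x ∈ M, ∀ y ∈ M, x + y ∈ M) {x : ℕ} (hx : x ∈ M) :
    ∀ t : ℕ, t * x ∈ M := by
  intro t
  induction t with
  | zero => simpa using h0
  | succ t ih => simpa [Nat.succ_mul] using hadd _ ih _ hx

lemma step_lemma (M : Set ℕ) (h0 : 0 ∈ M) (hadd : ∀ x ∈ M, ∀ y ∈ M, x + y ∈ M)
    (d an : ℕ) (hd : 0 < d) (han : 0 < an) (hco : Nat.Coprime an d)
    (hanM : an ∈ M) (F' : ℤ) (hF' : FrobData M F') :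
    FrobData {m : ℕ | ∃ s ∈ M, ∃ k : ℕ, m = d * s + k * an}
      (d * F' + (d - 1) * an) := by
  haveI : NeZero d := ⟨hd.ne'⟩
  obtain ⟨hF1, hF2, hF3⟩ := hF'
  set u : (ZMod d)ˣ := ZMod.unitOfCoprime an hco with hu
  have huan : (u : ZMod d) = (an : ℕ) := ZMod.coe_unitOfCoprime an hco
  refine ⟨?_, ?_, ?_⟩
  · have : (1 : ℤ) ≤ an := by exact_mod_cast han
    have : (1 : ℤ) ≤ d := by exact_mod_cast hd
    nlinarith
  · intro m hm
    set j : ℕ := ((m : ZMod d) * (↑u⁻¹ : ZMod d)).val with hjdef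
    have hj : j < d := ZMod.val_lt _
    have hjm : ((j * an : ℕ) : ZMod d) = (m : ZMod d) := by
      push_cast
      rw [hjdef, ZMod.natCast_val, ZMod.cast_id, mul_assoc, ← huan, Units.inv_mul, mul_one]
    have hdvd : (d : ℤ) ∣ ((m : ℤ) - (j : ℤ) * (an : ℤ)) := by
      rw [← ZMod.intCast_zmod_eq_zero_iff_dvd]
      push_cast
      rw [show ((j : ZMod d)) * (an : ZMod d) = (m : ZMod d) by exact_mod_cast hjm]
      ring
    obtain ⟨x, hx⟩ := hdvd
    have hj' : (j : ℤ) ≤ (d : ℤ) - 1 := by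
      have : (j : ℤ) < (d : ℤ) := by exact_mod_cast hj
      omega
    have han' : (1 : ℤ) ≤ an := by exact_mod_cast han
    have hd' : (0 : ℤ) < d := by exact_mod_cast hd
    have hxF : F' < x := by
      have h1 : (d : ℤ) * F' < (d : ℤ) * x := by nlinarith
      exact lt_of_mul_lt_mul_left h1 (le_of_lt hd')
    have hx0 : 0 ≤ x := by omega
    have hsM : x.toNat ∈ M := by
      apply hF2
      rwa [Int.toNat_of_nonneg hx0]
    refine ⟨x.toNat, hsM, j, ?_⟩
    have : (m : ℤ) = (d : ℤ) * (x.toNat : ℤ) + (j : ℤ) * (an : ℤ) := by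
      rw [Int.toNat_of_nonneg hx0]; omega
    exact_mod_cast this
  · rintro m hmF ⟨s, hs, k, hk⟩
    have hE : (d : ℤ) * F' + ((d : ℤ) - 1) * an = (d : ℤ) * s + (k : ℤ) * an := by
      rw [← hmF]; exact_mod_cast hk
    have hz : ((k : ZMod d) + 1) * (an : ZMod d) = 0 := by
      have := congrArg (fun z : ℤ => (z : ZMod d)) hE
      push_cast at this
      simp [ZMod.natCast_self] at this
      linear_combination -this
    have hk1 : ((k : ZMod d) + 1) = 0 := by
      have := congrArg (fun z => z * (↑u⁻¹ : ZMod d)) hz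
      simp only [zero_mul] at this
      rw [mul_assoc, ← huan, Units.mul_inv, mul_one] at this
      exact this
    have hdvd : (d : ℤ) ∣ ((k : ℤ) + 1) := by
      rw [← ZMod.intCast_zmod_eq_zero_iff_dvd]
      push_cast
      exact_mod_cast hk1
    obtain ⟨t, ht⟩ := hdvd
    have hd' : (0 : ℤ) < d := by exact_mod_cast hd
    have ht1 : 1 ≤ t := by nlinarith [Int.natCast_nonneg k]
    have hFs : F' = (s : ℤ) + (t - 1) * (an : ℤ) := by
      have h2 : (d : ℤ) * F' = (d : ℤ) * ((s : ℤ) + (t - 1) * an) := by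
        have hkdt : (k : ℤ) = d * t - 1 := by omega
        rw [hkdt] at hE
        ring_nf
        ring_nf at hE
        linarith
      exact mul_left_cancel₀ (ne_of_gt hd') h2
    set r : ℕ := (t - 1).toNat with hr
    have hrt : ((r : ℤ)) = t - 1 := Int.toNat_of_nonneg (by omega)
    have hmem : s + r * an ∈ M := hadd _ hs _ (nsmul_mem_closed h0 hadd hanM r)
    exact hF3 (s + r * an) (by push_cast; rw [hrt] at *; omega) hmem

lemma key_frobenius : ∀ n : ℕ, 1 ≤ n → ∀ a : ℕ → ℕ,
    (∀ i, 1 ≤ i → i ≤ n → 0 < a i) → dseq a n = 1 → SmoothSeq a n →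
    FrobData (gen a n)
      ((∑ i ∈ Finset.Icc 2 n, (cseq a i * a i : ℤ)) - ∑ i ∈ Finset.Icc 1 n, (a i : ℤ)) := by
  intro n hn
  induction n, hn using Nat.le_induction with
  | base =>
    intro a hpos hgcd hsmooth
    have ha1 : a 1 = 1 := by
      have h : dseq a 1 = a 1 := by simp [dseq]
      omega
    have hempty : Finset.Icc 2 1 = (∅ : Finset ℕ) := by decide
    rw [hempty, Finset.Icc_self]
    simp only [Finset.sum_empty, Finset.sum_singleton, ha1]
    refine ⟨by norm_num, ?_, ?_⟩
    · intro m _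
      exact (mem_gen_iff a 1 m).2 ⟨fun _ => m, by simp [ha1]⟩
    · intro m hm
      exact absurd hm (by omega)
  | succ n hn ih =>
    intro a hpos hgcd hsmooth
    set d := dseq a n with hd
    have hd0 : 0 < d := dseq_pos a hn (hpos 1 le_rfl (by omega))
    set b := fun i => a i / d with hb
    have hab : ∀ i, 1 ≤ i → i ≤ n → a i = d * b i := fun i h1 h2 =>
      (Nat.mul_div_cancel' (dseq_dvd a h1 h2)).symm
    have hbpos : ∀ i, 1 ≤ i → i ≤ n → 0 < b i := by
      intro i h1 h2
      have h3 := hpos i h1 (by omega)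
      have h4 := hab i h1 h2
      rcases Nat.eq_zero_or_pos (b i) with h | h
      · rw [h, Nat.mul_zero] at h4; omega
      · exact h
    have hdscale : ∀ k, k ≤ n → dseq a k = d * dseq b k := fun k hk =>
      dseq_scale a b d k (fun i h1 h2 => hab i h1 (h2.trans hk))
    have hdbn : dseq b n = 1 := by
      have h := hdscale n le_rfl
      have : d * dseq b n = d * 1 := by omega
      exact Nat.eq_of_mul_eq_mul_left hd0 this
    have hcseq : ∀ k, 2 ≤ k → k ≤ n → cseq a k = cseq b k := by
      intro k h2 hk
      unfold cseq
      rw [hdscale k hk, hdscale (k - 1) (by omega), Nat.mul_div_mul_left _ _ hd0]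
    have hbsmooth : SmoothSeq b n := by
      intro k h2 hk
      have hs := hsmooth k h2 (by omega)
      rw [hcseq k h2 hk, hab k (by omega) hk] at hs
      rw [gen_scale a b d (k - 1) (fun i hi1 hi2 => hab i hi1 (by omega)) ] at hs
      obtain ⟨x, hx, hxe⟩ := hs
      have hx2 : d * (cseq b k * b k) = d * x := by rw [← hxe]; ring
      have := Nat.eq_of_mul_eq_mul_left hd0 hx2
      rwa [this]
    have hco : Nat.Coprime (a (n + 1)) d := by
      have h := dseq_succ a (show 1 ≤ n + 1 by omega)
      simp only [Nat.add_sub_cancel] at h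
      rw [hgcd] at h
      exact h.symm
    have han1 : 0 < a (n + 1) := hpos (n + 1) (by omega) le_rfl
    have hcn : cseq a (n + 1) = d := by
      unfold cseq
      simp only [Nat.add_sub_cancel, hgcd, Nat.div_one]
      rfl
    have h0gen : 0 ∈ gen b n := (mem_gen_iff b n 0).2 ⟨fun _ => 0, by simp⟩
    have haddgen : ∀ x ∈ gen b n, ∀ y ∈ gen b n, x + y ∈ gen b n := by
      intro x hx y hy
      exact AddSubmonoid.add_mem _ hx hy
    have hanM : a (n + 1) ∈ gen b n := by
      have hs := hsmooth (n + 1) (by omega) le_rfl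
      simp only [Nat.add_sub_cancel] at hs
      rw [hcn] at hs
      rw [gen_scale a b d n hab] at hs
      obtain ⟨x, hx, hxe⟩ := hs
      have := Nat.eq_of_mul_eq_mul_left hd0 hxe
      rwa [this]
    have hIH := ih b hbpos hdbn hbsmooth
    have hstep := step_lemma (gen b n) h0gen haddgen d (a (n + 1)) hd0 han1 hco hanM _ hIH
    have hset : gen a (n + 1) = {m : ℕ | ∃ s ∈ gen b n, ∃ k : ℕ, m = d * s + k * a (n + 1)} := by
      ext m
      rw [gen_succ a (n + 1) (by omega) m]
      simp only [Nat.add_sub_cancel, Set.mem_setOf_eq]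
      constructor
      · rintro ⟨s, hs, j, rfl⟩
        rw [gen_scale a b d n hab] at hs
        obtain ⟨x, hx, rfl⟩ := hs
        exact ⟨x, hx, j, rfl⟩
      · rintro ⟨x, hx, j, rfl⟩
        exact ⟨d * x, (gen_scale a b d n hab _).2 ⟨x, hx, rfl⟩, j, rfl⟩
    have hnum : (∑ i ∈ Finset.Icc 2 (n + 1), (cseq a i * a i : ℤ)) -
          ∑ i ∈ Finset.Icc 1 (n + 1), (a i : ℤ)
        = (d : ℤ) * ((∑ i ∈ Finset.Icc 2 n, (cseq b i * b i : ℤ)) -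
            ∑ i ∈ Finset.Icc 1 n, (b i : ℤ)) + ((d : ℤ) - 1) * (a (n + 1)) := by
      rw [show Finset.Icc 2 (n + 1) = insert (n + 1) (Finset.Icc 2 n) by
            ext x; simp [Finset.mem_Icc]; omega,
          show Finset.Icc 1 (n + 1) = insert (n + 1) (Finset.Icc 1 n) by
            ext x; simp [Finset.mem_Icc]; omega,
          Finset.sum_insert (by simp [Finset.mem_Icc]),
          Finset.sum_insert (by simp [Finset.mem_Icc])]
      have e1 : (∑ i ∈ Finset.Icc 2 n, (cseq a i * a i : ℤ))
          = ∑ i ∈ Finset.Icc 2 n, (d : ℤ) * (cseq b i * b i : ℤ) := by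
        apply Finset.sum_congr rfl
        intro i hi
        rw [Finset.mem_Icc] at hi
        rw [hcseq i hi.1 hi.2, hab i (by omega) hi.2]
        push_cast; ring
      have e2 : (∑ i ∈ Finset.Icc 1 n, (a i : ℤ))
          = ∑ i ∈ Finset.Icc 1 n, (d : ℤ) * (b i : ℤ) := by
        apply Finset.sum_congr rfl
        intro i hi
        rw [Finset.mem_Icc] at hi
        rw [hab i hi.1 hi.2]
        push_cast; ring
      rw [e1, e2, hcn, ← Finset.mul_sum, ← Finset.mul_sum]
      ring
    rw [hset, hnum]
    exact hstep

lemma frob_eq_of_frobData (S : NumericalSemigroup) (F : ℤ) (h : FrobData S.carrier F) :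
    S.Frob = F := by
  obtain ⟨h1, h2, h3⟩ := h
  unfold NumericalSemigroup.Frob
  apply le_antisymm
  · apply Finset.max'_le
    intro y hy
    rcases Finset.mem_insert.1 hy with rfl | hy
    · exact h1
    · obtain ⟨m, hm, rfl⟩ := Finset.mem_image.1 hy
      by_contra hlt
      push_neg at hlt
      have hmem : m ∈ S.carrier := h2 m hlt
      rw [Set.Finite.mem_toFinset, Set.mem_compl_iff] at hm
      exact hm hmem
  · apply Finset.le_max'
    rcases (show F = -1 ∨ 0 ≤ F by omega) with rfl | hF0
    · exact Finset.mem_insert_self _ _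
    · refine Finset.mem_insert.2 (Or.inr ?_)
      refine Finset.mem_image.2 ⟨F.toNat, ?_, Int.toNat_of_nonneg hF0⟩
      rw [Set.Finite.mem_toFinset, Set.mem_compl_iff]
      exact h3 F.toNat (Int.toNat_of_nonneg hF0)

end FrobeniusAux

open NumericalSemigroup in
/-- For a smooth sequence `(a_1, …, a_n)` of relatively prime positive integers and
`S = ⟨a_1, …, a_n⟩`: `F(S) = Σ_{i=2}^n c_i a_i − Σ_{i=1}^n a_i`. -/
theorem frobenius_smooth (n : ℕ) (hn : 2 ≤ n) (a : ℕ → ℕ)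
    (hpos : ∀ i, 1 ≤ i → i ≤ n → 0 < a i) (hgcd : dseq a n = 1) (hsmooth : SmoothSeq a n)
    (S : NumericalSemigroup) (hS : S.carrier = gen a n) :
    S.Frob = (∑ i ∈ Finset.Icc 2 n, (cseq a i * a i : ℤ)) - ∑ i ∈ Finset.Icc 1 n, (a i : ℤ) := by
  apply frob_eq_of_frobData
  rw [hS]
  exact key_frobenius n (by omega) a hpos hgcd hsmooth
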